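/- Fix an integer p ≥ 1 and a natural number c with c < p. Define the p × p complex matrices X (the shift operator, with entries X_{j,k} = 1 if k ≡ j + 1 (mod p) and 0 otherwise) and R = diag( e^{2πi·j/p²} )_{j=0}^{p−1}. Then ( R · (X^c)† · R† )† = X^c · D, where † denotes the conjugate transpose and D is the diagonal matrix with entries D_{j,j} = e^{−2πi·c/p²} · e^{2πi/p} for the c indices j with j < c, and D_{j,j} = e^{−2πi·c/p²} for the remaining p − c indices. In other words, the uncorrected output of the qupit gate-teleportation gadget with measurement outcome c equals X^c composed with a global Z-rotation GR_Z(−2πc/p²) and a partial Z-rotation GR_Z(2π/p, S) applied on a set S of exactly c computational basis states, followed by the intended rotation R_Z(2π/p²). -/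
import Mathlib


open Matrix

/-- The uncorrected output of the qupit gate-teleportation gadget with measurement
outcome `c`: with `X` the generalized Pauli shift on `ℂ^p` and `R = R_Z(2π/p²)` the
diagonal rotation, one has `(R (X^c)† R†)† = X^c · D`, where `D` is diagonal with entries
`e^{-2πic/p²}·e^{2πi/p}` on the `c` indices `j < c` and `e^{-2πic/p²}` on the remaining
`p - c` indices. -/
theorem stmt_8 (p : ℕ) (hp : 1 ≤ p) (c : ℕ) (hc : c < p)
    (X R D : Matrix (Fin p) (Fin p) ℂ)
    (hX : ∀ j k : Fin p, X j k = if (k : ℕ) = ((j : ℕ) + 1) % p then 1 else 0)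
    (hR : R = Matrix.diagonal fun j : Fin p =>
        Complex.exp (2 * (Real.pi : ℂ) * Complex.I * ((j : ℕ) : ℂ) / (p : ℂ) ^ 2))
    (hD : D = Matrix.diagonal fun j : Fin p =>
        if (j : ℕ) < c then
          Complex.exp (-(2 * (Real.pi : ℂ) * Complex.I * (c : ℂ) / (p : ℂ) ^ 2)) *
            Complex.exp (2 * (Real.pi : ℂ) * Complex.I / (p : ℂ))
        else Complex.exp (-(2 * (Real.pi : ℂ) * Complex.I * (c : ℂ) / (p : ℂ) ^ 2))) :
    (R * (X ^ c)ᴴ * Rᴴ)ᴴ = X ^ c * D := by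
  have hp0 : 0 < p := hp
  have hpC : (p : ℂ) ≠ 0 := Nat.cast_ne_zero.mpr (by omega)
  have hXpow : ∀ n (j k : Fin p), (X ^ n) j k =
      if (k : ℕ) = ((j : ℕ) + n) % p then 1 else 0 := by
    intro n
    induction n with
    | zero =>
      intro j k
      simp [Matrix.one_apply, Nat.mod_eq_of_lt j.isLt, Fin.ext_iff, eq_comm]
    | succ n ih =>
      intro j k
      rw [pow_succ, Matrix.mul_apply]
      have ha : ((j : ℕ) + n) % p < p := Nat.mod_lt _ hp0
      set a : Fin p := ⟨((j : ℕ) + n) % p, ha⟩ with haa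
      have key : ∀ l : Fin p, (X ^ n) j l * X l k = if l = a then X l k else 0 := by
        intro l
        rw [ih]
        by_cases h : (l : ℕ) = ((j : ℕ) + n) % p
        · simp [Fin.ext_iff, h, haa]
        · simp [Fin.ext_iff, h, haa]
      simp_rw [key]
      rw [Finset.sum_ite_eq' Finset.univ a (fun l => X l k)]
      simp only [Finset.mem_univ, if_true]
      rw [hX]
      simp only [haa]
      rw [Nat.mod_add_mod, Nat.add_assoc]
  have hstar : ∀ m : ℕ,
      star (Complex.exp (2 * (Real.pi : ℂ) * Complex.I * (m : ℂ) / (p : ℂ) ^ 2))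
        = Complex.exp (-(2 * (Real.pi : ℂ) * Complex.I * (m : ℂ) / (p : ℂ) ^ 2)) := by
    intro m
    rw [Complex.star_def, ← Complex.exp_conj]
    congr 1
    simp [map_div₀, Complex.conj_I, map_ofNat]
    ring
  rw [conjTranspose_mul, conjTranspose_mul, conjTranspose_conjTranspose,
    conjTranspose_conjTranspose]
  rw [hR, hD, diagonal_conjTranspose]
  ext j k
  rw [Matrix.diagonal_mul, Matrix.mul_diagonal, Matrix.mul_diagonal, hXpow, Pi.star_apply]
  by_cases h : (k : ℕ) = ((j : ℕ) + c) % p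
  · simp only [h, if_true, one_mul, mul_one, hstar]
    by_cases hlt : (j : ℕ) + c < p
    · have hm : ((j : ℕ) + c) % p = (j : ℕ) + c := Nat.mod_eq_of_lt hlt
      rw [hm, if_neg (by omega)]
      rw [← Complex.exp_add]
      congr 1
      push_cast
      field_simp
      ring
    · have hge : p ≤ (j : ℕ) + c := le_of_not_gt hlt
      have hm : ((j : ℕ) + c) % p = (j : ℕ) + c - p := by
        rw [Nat.mod_eq_sub_mod hge, Nat.mod_eq_of_lt (by omega)]
      rw [hm, if_pos (by omega)]
      rw [← Complex.exp_add, ← Complex.exp_add]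
      congr 1
      rw [Nat.cast_sub hge]
      push_cast
      field_simp
      ring
  · simp [h]
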